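/- Any basis produced by the symplectic greedy procedure is X-orthonormal: if Ã_{2k} = [e_1|…|e_k|Te_1|…|Te_k] is J-symplectic with J = X^{1/2}𝕁_{2n}X^{1/2} and T = X^{-1/2}𝕁_{2n}ᵀX^{1/2}, and each ‖e_i‖_X = 1, then Ã_{2k}ᵀ X Ã_{2k} = I_{2k}. -/

import Mathlib

open Matrix

noncomputable section

def Js (k : ℕ) : Matrix (Fin k ⊕ Fin k) (Fin k ⊕ Fin k) ℝ :=
  Matrix.fromBlocks 0 1 (-1) 0

lemma Js_mul_transpose (k : ℕ) : Js k * (Js k)ᵀ = 1 := by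
  simp [Js, Matrix.fromBlocks_transpose, Matrix.fromBlocks_multiply,
    ← Matrix.fromBlocks_one]

lemma Js_transpose (k : ℕ) : (Js k)ᵀ = -(Js k) := by
  simp [Js, Matrix.fromBlocks_transpose, Matrix.fromBlocks_neg]

theorem greedy_symplectic_basis_X_orthonormal (n k : ℕ)
    (X Xs : Matrix (Fin n ⊕ Fin n) (Fin n ⊕ Fin n) ℝ)
    (hX : X.PosDef) (hXs_sym : Xsᵀ = Xs) (hXs : Xs * Xs = X) (hXsp : Xs.PosDef)
    (e : Fin k → (Fin n ⊕ Fin n) → ℝ)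
    (Atilde : Matrix (Fin n ⊕ Fin n) (Fin k ⊕ Fin k) ℝ)
    (hcols : ∀ r j, Atilde r j =
      Sum.elim (fun i => e i r) (fun i => ((Xs⁻¹ * (Js n)ᵀ * Xs) *ᵥ e i) r) j)
    (hsymp : Atildeᵀ * (Xs * Js n * Xs) * Atilde = Js k)
    (hnorm : ∀ i, e i ⬝ᵥ (X *ᵥ e i) = 1) :
    Atildeᵀ * X * Atilde = 1 := by
  set T : Matrix (Fin n ⊕ Fin n) (Fin n ⊕ Fin n) ℝ := Xs⁻¹ * (Js n)ᵀ * Xs with hT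
  set E : Matrix (Fin n ⊕ Fin n) (Fin k) ℝ := Matrix.of (fun r i => e i r) with hE
  have hdet : IsUnit Xs.det := isUnit_iff_ne_zero.mpr (ne_of_gt hXsp.det_pos)
  have hinv1 : Xs * Xs⁻¹ = 1 := Matrix.mul_nonsing_inv _ hdet
  have hinv2 : Xs⁻¹ * Xs = 1 := Matrix.nonsing_inv_mul _ hdet
  have hA : Atilde = Matrix.fromCols E (T * E) := by
    ext r j
    cases j with
    | inl i => simp [hcols, Matrix.fromCols, hE]
    | inr i =>
      simp only [hcols, Sum.elim_inr, Matrix.fromCols, Matrix.of_apply,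
        Matrix.mul_apply, Matrix.mulVec, dotProduct, hE]
  have hST : (Xs * Js n * Xs) * T = X := by
    rw [hT]
    calc Xs * Js n * Xs * (Xs⁻¹ * (Js n)ᵀ * Xs)
        = Xs * Js n * (Xs * Xs⁻¹) * (Js n)ᵀ * Xs := by noncomm_ring
      _ = Xs * (Js n * (Js n)ᵀ) * Xs := by rw [hinv1, Matrix.mul_one]; simp only [Matrix.mul_assoc]
      _ = X := by rw [Js_mul_transpose, Matrix.mul_one, hXs]
  have hXT : X * T = -(Xs * Js n * Xs) := by
    rw [hT, ← hXs, Js_transpose]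
    calc Xs * Xs * (Xs⁻¹ * -Js n * Xs)
        = Xs * (Xs * Xs⁻¹) * -Js n * Xs := by noncomm_ring
      _ = -(Xs * Js n * Xs) := by rw [hinv1, Matrix.mul_one]; simp only [Matrix.mul_neg, Matrix.neg_mul, Matrix.mul_assoc]
  have key : X * Atilde = (Xs * Js n * Xs) * Atilde * (Js k)ᵀ := by
    rw [hA]
    have hJkT : (Js k)ᵀ = Matrix.fromBlocks 0 (-1) 1 0 := by
      simp [Js, Matrix.fromBlocks_transpose]
    rw [hJkT, Matrix.mul_fromCols, Matrix.mul_fromCols,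
      Matrix.fromCols_mul_fromBlocks]
    simp only [Matrix.mul_zero, Matrix.mul_one, Matrix.mul_neg, zero_add, add_zero, mul_zero, mul_one, mul_neg]
    have h1 : Xs * Js n * Xs * (T * E) = X * E := by rw [← Matrix.mul_assoc, hST]
    have h2 : X * (T * E) = -(Xs * Js n * Xs * E) := by rw [← Matrix.mul_assoc, hXT, Matrix.neg_mul]
    rw [h1, h2]
  calc Atildeᵀ * X * Atilde = Atildeᵀ * (X * Atilde) := by rw [Matrix.mul_assoc]
    _ = Atildeᵀ * ((Xs * Js n * Xs) * Atilde * (Js k)ᵀ) := by rw [key]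
    _ = (Atildeᵀ * (Xs * Js n * Xs) * Atilde) * (Js k)ᵀ := by
        simp only [Matrix.mul_assoc]
    _ = 1 := by rw [hsymp, Js_mul_transpose]
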